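/- Let H be a graph on {x_1,...,x_n} and G = H* its whisker graph with cover ideal J(G) ⊂ S = K[x_1,...,x_n,y_1,...,y_n]. Order the minimal generators of J(G)^N decreasingly by the lexicographic order induced by x_1 > y_1 > x_2 > y_2 > ⋯ > x_n > y_n. Then for every generator u of J(G)^N, the colon ideal (v : v a generator of J(G)^N with v >_lex u) : (u) is generated by a subset of the variables {x_1,...,x_n}; in particular J(G)^N has linear quotients for every N ≥ 1. -/
import Mathlib


/-- A vertex cover: a set of vertices meeting every edge. -/
def IsVertexCover {V : Type*} (G : SimpleGraph V) (C : Set V) : Prop :=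
  ∀ ⦃v w : V⦄, G.Adj v w → v ∈ C ∨ w ∈ C

/-- A minimal vertex cover: no proper subset is a vertex cover. -/
def IsMinimalVertexCover {V : Type*} (G : SimpleGraph V) (C : Set V) : Prop :=
  IsVertexCover G C ∧ ∀ D : Set V, D ⊂ C → ¬ IsVertexCover G D

/-- An independent set: pairwise non-adjacent vertices. -/
def IsIndepSet {V : Type*} (G : SimpleGraph V) (S : Set V) : Prop :=
  ∀ ⦃v : V⦄, v ∈ S → ∀ ⦃w : V⦄, w ∈ S → ¬ G.Adj v w

/-- A maximal independent set: no proper superset is independent. -/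
def IsMaximalIndepSet {V : Type*} (G : SimpleGraph V) (S : Set V) : Prop :=
  IsIndepSet G S ∧ ∀ T : Set V, IsIndepSet G T → S ⊆ T → S = T

/-- The cover ideal of a graph: the monomial ideal generated by the products of the
variables over the minimal vertex covers of G. -/
noncomputable def coverIdeal (K : Type*) [Field K] {V : Type*} [DecidableEq V]
    (G : SimpleGraph V) : Ideal (MvPolynomial V K) :=
  Ideal.span {m | ∃ C : Finset V, IsMinimalVertexCover G ↑C ∧
    m = ∏ v ∈ C, MvPolynomial.X v}

/-- `u` is (the exponent vector of) a minimal monomial generator of the monomial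
ideal `I`: the monomial `X^u` lies in `I` and no proper divisor of it lies in `I`. -/
def IsMinimalGen {K : Type*} [Field K] {V : Type*}
    (I : Ideal (MvPolynomial V K)) (u : V →₀ ℕ) : Prop :=
  MvPolynomial.monomial u (1 : K) ∈ I ∧
    ∀ v : V →₀ ℕ, v ≤ u → MvPolynomial.monomial v (1 : K) ∈ I → v = u

/-- The whisker graph `H*` of a graph `H` on `{x_1,…,x_n}`: vertices `x_i = Sum.inl i`
and `y_i = Sum.inr i`, edges those of `H` together with the whiskers `x_i y_i`. -/
def whisker {n : ℕ} (H : SimpleGraph (Fin n)) : SimpleGraph (Fin n ⊕ Fin n) :=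
  SimpleGraph.fromRel (fun v w =>
    (∃ i j : Fin n, v = Sum.inl i ∧ w = Sum.inl j ∧ H.Adj i j) ∨
    (∃ i : Fin n, v = Sum.inl i ∧ w = Sum.inr i))

/-- The rank of a variable in the order x_1 > y_1 > x_2 > y_2 > ⋯ > x_n > y_n
(smaller rank = larger variable). -/
def vrank {n : ℕ} : (Fin n ⊕ Fin n) → ℕ :=
  Sum.elim (fun i => 2 * (i : ℕ)) (fun i => 2 * (i : ℕ) + 1)

/-- u >_lex v with respect to the variable order x_1 > y_1 > ⋯ > x_n > y_n. -/
def lexGT {n : ℕ} (u v : (Fin n ⊕ Fin n) →₀ ℕ) : Prop :=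
  ∃ p : Fin n ⊕ Fin n, v p < u p ∧ ∀ q : Fin n ⊕ Fin n, vrank q < vrank p → u q = v q


open MvPolynomial Finsupp

namespace Stmt19Aux

variable {n : ℕ}

/-- `A` is a vertex cover of `H` (as a finset of `Fin n`). -/
def coverH (H : SimpleGraph (Fin n)) (A : Finset (Fin n)) : Prop :=
  ∀ ⦃i j : Fin n⦄, H.Adj i j → i ∈ A ∨ j ∈ A

lemma coverH_insert {H : SimpleGraph (Fin n)} {A : Finset (Fin n)} (h : coverH H A)
    (i : Fin n) : coverH H (insert i A) := fun a b hab =>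
  (h hab).imp (Finset.mem_insert_of_mem) (Finset.mem_insert_of_mem)

/-- The minimal vertex cover of the whisker graph associated to a cover `A` of `H`. -/
def coverSet (A : Finset (Fin n)) : Finset (Fin n ⊕ Fin n) :=
  A.image Sum.inl ∪ Aᶜ.image Sum.inr

lemma mem_coverSet_inl {A : Finset (Fin n)} {i : Fin n} :
    Sum.inl i ∈ coverSet A ↔ i ∈ A := by
  simp [coverSet]

lemma mem_coverSet_inr {A : Finset (Fin n)} {i : Fin n} :
    Sum.inr i ∈ coverSet A ↔ i ∉ A := by
  simp [coverSet]

/-- The exponent vector of the cover monomial. -/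
noncomputable def cV (A : Finset (Fin n)) : (Fin n ⊕ Fin n) →₀ ℕ :=
  ∑ v ∈ coverSet A, Finsupp.single v 1

lemma cV_apply {A : Finset (Fin n)} (p : Fin n ⊕ Fin n) :
    cV A p = if p ∈ coverSet A then 1 else 0 := by
  rw [cV, Finset.sum_apply']
  simp [Finsupp.single_apply]

lemma cV_apply_inl {A : Finset (Fin n)} (i : Fin n) :
    cV A (Sum.inl i) = if i ∈ A then 1 else 0 := by
  rw [cV_apply]; simp [mem_coverSet_inl]

lemma cV_apply_inr {A : Finset (Fin n)} (i : Fin n) :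
    cV A (Sum.inr i) = if i ∈ A then 0 else 1 := by
  rw [cV_apply]; by_cases h : i ∈ A <;> simp [mem_coverSet_inr, h]

lemma cV_pair (A : Finset (Fin n)) (i : Fin n) :
    cV A (Sum.inl i) + cV A (Sum.inr i) = 1 := by
  rw [cV_apply_inl, cV_apply_inr]; by_cases h : i ∈ A <;> simp [h]

section Graph
variable {H : SimpleGraph (Fin n)}

lemma whisker_adj_cases {v w : Fin n ⊕ Fin n} (h : (whisker H).Adj v w) :
    (∃ i j, H.Adj i j ∧ v = Sum.inl i ∧ w = Sum.inl j) ∨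
    (∃ i, v = Sum.inl i ∧ w = Sum.inr i) ∨
    (∃ i, v = Sum.inr i ∧ w = Sum.inl i) := by
  rw [whisker, SimpleGraph.fromRel_adj] at h
  obtain ⟨-, h | h⟩ := h
  · rcases h with ⟨i, j, rfl, rfl, hij⟩ | ⟨i, rfl, rfl⟩
    · exact Or.inl ⟨i, j, hij, rfl, rfl⟩
    · exact Or.inr (Or.inl ⟨i, rfl, rfl⟩)
  · rcases h with ⟨i, j, rfl, rfl, hij⟩ | ⟨i, rfl, rfl⟩
    · exact Or.inl ⟨j, i, hij.symm, rfl, rfl⟩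
    · exact Or.inr (Or.inr ⟨i, rfl, rfl⟩)

lemma whisker_adj_of_H {i j : Fin n} (h : H.Adj i j) :
    (whisker H).Adj (Sum.inl i) (Sum.inl j) := by
  rw [whisker, SimpleGraph.fromRel_adj]
  exact ⟨by simp [h.ne], Or.inl (Or.inl ⟨i, j, rfl, rfl, h⟩)⟩

lemma whisker_adj_whisk (i : Fin n) :
    (whisker H).Adj (Sum.inl i) (Sum.inr i) := by
  rw [whisker, SimpleGraph.fromRel_adj]
  exact ⟨by simp, Or.inl (Or.inr ⟨i, rfl, rfl⟩)⟩

lemma isMinimalVertexCover_iff (C : Finset (Fin n ⊕ Fin n)) :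
    IsMinimalVertexCover (whisker H) ↑C ↔ ∃ A, coverH H A ∧ C = coverSet A := by
  constructor
  · rintro ⟨hcov, hmin⟩
    refine ⟨Finset.univ.filter (fun i => Sum.inl i ∈ C), ?_, ?_⟩
    · intro i j hij
      have := hcov (whisker_adj_of_H hij)
      simpa using this
    · ext v
      rcases v with i | i
      · simp [mem_coverSet_inl]
      · simp only [mem_coverSet_inr, Finset.mem_filter, Finset.mem_univ, true_and]
        constructor
        · intro hyC hxC
          -- remove inr i : still a cover, contradiction with minimality
          refine hmin (↑C \ {Sum.inr i}) ?_ ?_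
          · constructor
            · intro z hz; exact hz.1
            · intro hsub
              have := hsub hyC
              simp at this
          · intro v w hadj
            rcases whisker_adj_cases hadj with ⟨a, b, hab, rfl, rfl⟩ | ⟨a, rfl, rfl⟩ | ⟨a, rfl, rfl⟩
            · rcases hcov (whisker_adj_of_H hab) with h | h
              · exact Or.inl ⟨h, by simp⟩
              · exact Or.inr ⟨h, by simp⟩
            · by_cases hai : a = i
              · subst hai; exact Or.inl ⟨hxC, by simp⟩
              · rcases hcov (whisker_adj_whisk a) with h | h
                · exact Or.inl ⟨h, by simp⟩
                · exact Or.inr ⟨h, by simp [hai]⟩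
            · by_cases hai : a = i
              · subst hai; exact Or.inr ⟨hxC, by simp⟩
              · rcases hcov (whisker_adj_whisk a) with h | h
                · exact Or.inr ⟨h, by simp⟩
                · exact Or.inl ⟨h, by simp [hai]⟩
        · intro hxC
          rcases hcov (whisker_adj_whisk i) with h | h
          · exact absurd h hxC
          · exact h
  · rintro ⟨A, hA, rfl⟩
    constructor
    · intro v w hadj
      rcases whisker_adj_cases hadj with ⟨a, b, hab, rfl, rfl⟩ | ⟨a, rfl, rfl⟩ | ⟨a, rfl, rfl⟩
      · rcases hA hab with h | h
        · exact Or.inl (by simpa [mem_coverSet_inl] using h)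
        · exact Or.inr (by simpa [mem_coverSet_inl] using h)
      · by_cases h : a ∈ A
        · exact Or.inl (by simpa [mem_coverSet_inl] using h)
        · exact Or.inr (by simpa [mem_coverSet_inr] using h)
      · by_cases h : a ∈ A
        · exact Or.inr (by simpa [mem_coverSet_inl] using h)
        · exact Or.inl (by simpa [mem_coverSet_inr] using h)
    · intro D hD hDcov
      have hsub := hD.subset
      obtain ⟨v, hvC, hvD⟩ := Set.exists_of_ssubset hD
      rcases v with i | i
      · have hiA : i ∈ A := by simpa [mem_coverSet_inl] using hvC
        rcases hDcov (whisker_adj_whisk i) with h | h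
        · exact hvD h
        · have : (Sum.inr i : Fin n ⊕ Fin n) ∈ (coverSet A : Set (Fin n ⊕ Fin n)) := hsub h
          simp only [Finset.coe_sort_coe, Finset.mem_coe, mem_coverSet_inr] at this
          exact this hiA
      · have hiA : i ∉ A := by simpa [mem_coverSet_inr] using hvC
        rcases hDcov (whisker_adj_whisk i) with h | h
        · have : (Sum.inl i : Fin n ⊕ Fin n) ∈ (coverSet A : Set (Fin n ⊕ Fin n)) := hsub h
          simp only [Finset.coe_sort_coe, Finset.mem_coe, mem_coverSet_inl] at this
          exact hiA this
        · exact hvD h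

end Graph

end Stmt19Aux
section IdealPart

open MvPolynomial Finsupp

namespace Stmt19Aux

variable {n : ℕ} (K : Type*) [Field K]

lemma prod_X_eq (C : Finset (Fin n ⊕ Fin n)) :
    (∏ v ∈ C, X v : MvPolynomial (Fin n ⊕ Fin n) K) =
      monomial (∑ v ∈ C, Finsupp.single v 1) 1 := by
  classical
  induction C using Finset.cons_induction with
  | empty => simp
  | cons a s ha ih =>
      rw [Finset.prod_cons, Finset.sum_cons, ih, X, monomial_mul, one_mul]

/-- Exponent vectors of the cover monomials. -/
def CovVecs (H : SimpleGraph (Fin n)) : Set ((Fin n ⊕ Fin n) →₀ ℕ) :=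
  {w | ∃ A, coverH H A ∧ w = cV A}

lemma coverIdeal_eq (H : SimpleGraph (Fin n)) :
    coverIdeal K (whisker H) =
      Ideal.span ((fun w => monomial w (1 : K)) '' CovVecs H) := by
  unfold coverIdeal
  congr 1
  ext m
  constructor
  · rintro ⟨C, hC, rfl⟩
    obtain ⟨A, hA, rfl⟩ := (isMinimalVertexCover_iff C).mp hC
    exact ⟨cV A, ⟨A, hA, rfl⟩, (prod_X_eq K _).symm⟩
  · rintro ⟨w, ⟨A, hA, rfl⟩, rfl⟩
    refine ⟨coverSet A, (isMinimalVertexCover_iff _).mpr ⟨A, hA, rfl⟩, ?_⟩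
    rw [prod_X_eq K]
    rfl

/-- Exponent vectors of the generators of the `N`-th power of the cover ideal. -/
def Gens (H : SimpleGraph (Fin n)) (N : ℕ) : Set ((Fin n ⊕ Fin n) →₀ ℕ) :=
  {w | ∃ f : Fin N → Finset (Fin n), (∀ k, coverH H (f k)) ∧ w = ∑ k, cV (f k)}

lemma pow_eq (H : SimpleGraph (Fin n)) (N : ℕ) :
    (coverIdeal K (whisker H)) ^ N =
      Ideal.span ((fun w => monomial w (1 : K)) '' Gens H N) := by
  induction N with
  | zero =>
      have h0 : Gens H 0 = {0} := by
        ext w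
        simp only [Gens, Set.mem_setOf_eq, Set.mem_singleton_iff]
        constructor
        · rintro ⟨f, -, rfl⟩; simp
        · rintro rfl; exact ⟨fun k => k.elim0, fun k => k.elim0, by simp⟩
      rw [pow_zero, h0, Set.image_singleton]
      rw [show (monomial (0 : (Fin n ⊕ Fin n) →₀ ℕ) (1 : K)) = 1 by simp]
      rw [Ideal.span_singleton_one, Ideal.one_eq_top]
  | succ N ih =>
      rw [pow_succ, ih, coverIdeal_eq K H, Ideal.span_mul_span']
      congr 1
      ext m
      constructor
      · rintro hm
        rw [Set.mem_mul] at hm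
        obtain ⟨a, ⟨wa, ⟨f, hf, rfl⟩, rfl⟩, b, ⟨wb, ⟨A, hA, rfl⟩, rfl⟩, rfl⟩ := hm
        refine ⟨∑ k, cV (f k) + cV A, ⟨Fin.snoc f A, ?_, ?_⟩, ?_⟩
        · intro k
          refine Fin.lastCases ?_ ?_ k
          · simpa using hA
          · intro k'; simpa using hf k'
        · rw [Fin.sum_univ_castSucc]; simp
        · rw [monomial_mul, one_mul]
      · rintro ⟨w, ⟨f, hf, rfl⟩, rfl⟩
        have hkey : (monomial (∑ k : Fin N, cV (f k.castSucc)) (1 : K)) *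
            monomial (cV (f (Fin.last N))) 1
            = monomial (∑ k : Fin (N + 1), cV (f k)) 1 := by
          rw [monomial_mul, one_mul, Fin.sum_univ_castSucc (f := fun k => cV (f k))]
        have h1 : (monomial (∑ k : Fin N, cV (f k.castSucc)) (1 : K)) ∈
            (fun w => monomial w (1 : K)) '' Gens H N :=
          ⟨_, ⟨fun k => f k.castSucc, fun k => hf _, rfl⟩, rfl⟩
        have h2 : (monomial (cV (f (Fin.last N))) (1 : K)) ∈
            (fun w => monomial w (1 : K)) '' CovVecs H :=
          ⟨_, ⟨f (Fin.last N), hf _, rfl⟩, rfl⟩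
        have hmem := Set.mul_mem_mul h1 h2
        rw [hkey] at hmem
        exact hmem

variable {H : SimpleGraph (Fin n)} {N : ℕ}

lemma gens_pair {w : (Fin n ⊕ Fin n) →₀ ℕ} (hw : w ∈ Gens H N) (i : Fin n) :
    w (Sum.inl i) + w (Sum.inr i) = N := by
  obtain ⟨f, hf, rfl⟩ := hw
  rw [Finset.sum_apply', Finset.sum_apply', ← Finset.sum_add_distrib]
  simp [cV_pair]

lemma gens_total {w : (Fin n ⊕ Fin n) →₀ ℕ} (hw : w ∈ Gens H N) :
    ∑ p : Fin n ⊕ Fin n, w p = n * N := by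
  rw [Fintype.sum_sum_type, ← Finset.sum_add_distrib]
  have : ∀ i : Fin n, w (Sum.inl i) + w (Sum.inr i) = N := gens_pair hw
  simp [this, Finset.sum_const, mul_comm]

lemma mem_of_monomial_mem {v : (Fin n ⊕ Fin n) →₀ ℕ}
    (h : monomial v (1 : K) ∈ (coverIdeal K (whisker H)) ^ N) :
    ∃ w ∈ Gens H N, w ≤ v := by
  classical
  rw [pow_eq] at h
  refine mem_ideal_span_monomial_image.mp h v ?_
  rw [support_monomial, if_neg one_ne_zero]
  exact Finset.mem_singleton_self v

lemma isMinimalGen_iff {u : (Fin n ⊕ Fin n) →₀ ℕ} :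
    IsMinimalGen ((coverIdeal K (whisker H)) ^ N) u ↔ u ∈ Gens H N := by
  constructor
  · rintro ⟨hmem, hmin⟩
    obtain ⟨w, hw, hle⟩ := mem_of_monomial_mem K hmem
    have hw' : monomial w (1 : K) ∈ (coverIdeal K (whisker H)) ^ N := by
      rw [pow_eq]; exact Ideal.subset_span ⟨w, hw, rfl⟩
    rwa [hmin w hle hw'] at hw
  · intro hu
    refine ⟨by rw [pow_eq]; exact Ideal.subset_span ⟨u, hu, rfl⟩, ?_⟩
    intro v hvu hv
    obtain ⟨w, hw, hwv⟩ := mem_of_monomial_mem K hv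
    have hsum : ∑ p : Fin n ⊕ Fin n, w p = ∑ p : Fin n ⊕ Fin n, u p := by
      rw [gens_total hw, gens_total hu]
    have hvle : ∀ p, v p ≤ u p := Finsupp.le_def.mp hvu
    have hwle : ∀ p, w p ≤ v p := Finsupp.le_def.mp hwv
    have hsv : ∑ p : Fin n ⊕ Fin n, v p = ∑ p : Fin n ⊕ Fin n, u p := by
      refine le_antisymm (Finset.sum_le_sum fun p _ => hvle p) ?_
      rw [← hsum]; exact Finset.sum_le_sum fun p _ => hwle p
    have := (Finset.sum_eq_sum_iff_of_le (fun p _ => hvle p)).mp hsv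
    exact Finsupp.ext fun p => this p (Finset.mem_univ p)

lemma cV_insert {A : Finset (Fin n)} {i : Fin n} (h : i ∉ A) (p : Fin n ⊕ Fin n) :
    cV (insert i A) p + Finsupp.single (Sum.inr i) 1 p
      = cV A p + Finsupp.single (Sum.inl i) 1 p := by
  rcases p with j | j
  · rcases eq_or_ne j i with rfl | hne
    · simp [cV_apply_inl, h, Finsupp.single_apply]
    · simp [cV_apply_inl, Finsupp.single_apply, hne, Ne.symm hne, Finset.mem_insert]
  · rcases eq_or_ne j i with rfl | hne
    · simp [cV_apply_inr, h, Finsupp.single_apply]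
    · simp [cV_apply_inr, Finsupp.single_apply, hne, Ne.symm hne, Finset.mem_insert]

lemma exchange {u : (Fin n ⊕ Fin n) →₀ ℕ} (hu : u ∈ Gens H N) {i : Fin n}
    (hi : 0 < u (Sum.inr i)) :
    ∃ u' ∈ Gens H N,
      u' + Finsupp.single (Sum.inr i) 1 = u + Finsupp.single (Sum.inl i) 1 := by
  classical
  obtain ⟨f, hf, rfl⟩ := hu
  have hex : ∃ k : Fin N, 0 < cV (f k) (Sum.inr i) := by
    by_contra hc
    push_neg at hc
    rw [Finset.sum_apply'] at hi
    simp only [Nat.le_zero] at hc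
    rw [Finset.sum_eq_zero fun k _ => hc k] at hi
    exact lt_irrefl 0 hi
  obtain ⟨k, hk⟩ := hex
  have hik : i ∉ f k := by
    rw [cV_apply_inr] at hk
    by_contra hmem
    simp [hmem] at hk
  refine ⟨∑ j, cV (Function.update f k (insert i (f k)) j), ⟨_, ?_, rfl⟩, ?_⟩
  · intro j
    rcases eq_or_ne j k with rfl | hjk
    · simpa using coverH_insert (hf j) i
    · simpa [Function.update_of_ne hjk] using hf j
  · ext p
    rw [Finsupp.add_apply, Finsupp.add_apply, Finset.sum_apply', Finset.sum_apply']
    have e1 : ∑ j, cV (Function.update f k (insert i (f k)) j) p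
        = cV (insert i (f k)) p + ∑ j ∈ Finset.univ.erase k, cV (f j) p := by
      rw [← Finset.add_sum_erase Finset.univ
        (fun j => cV (Function.update f k (insert i (f k)) j) p) (Finset.mem_univ k)]
      congr 1
      · simp
      · exact Finset.sum_congr rfl fun j hj => by
          rw [Function.update_of_ne (Finset.ne_of_mem_erase hj)]
    have e2 : ∑ j, cV (f j) p = cV (f k) p + ∑ j ∈ Finset.univ.erase k, cV (f j) p :=
      (Finset.add_sum_erase Finset.univ (fun j => cV (f j) p) (Finset.mem_univ k)).symm
    rw [e1, e2]
    have := cV_insert hik p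
    omega

lemma pivot {u w : (Fin n ⊕ Fin n) →₀ ℕ}
    (hw : w ∈ Gens H N) (hu : u ∈ Gens H N) (h : lexGT w u) :
    ∃ i, 0 < u (Sum.inr i) ∧ u (Sum.inl i) < w (Sum.inl i) := by
  obtain ⟨p, hlt, heq⟩ := h
  rcases p with i | i
  · refine ⟨i, ?_, hlt⟩
    have h1 := gens_pair hw i
    have h2 := gens_pair hu i
    omega
  · exfalso
    have h3 : w (Sum.inl i) = u (Sum.inl i) := heq _ (by show 2*(i:ℕ) < 2*(i:ℕ)+1; omega)
    have h1 := gens_pair hw i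
    have h2 := gens_pair hu i
    omega

end Stmt19Aux

end IdealPart
/-- Corollary 4.6(a): for every generator u of J(G)^N, the colon ideal of the span of
the lexicographically larger generators by u is generated by a subset of {x_1,…,x_n};
in particular J(G)^N has linear quotients. -/
theorem stmt_19 {n : ℕ} (K : Type*) [Field K] (H : SimpleGraph (Fin n))
    (N : ℕ) (hN : 1 ≤ N)
    (u : (Fin n ⊕ Fin n) →₀ ℕ)
    (hu : IsMinimalGen ((coverIdeal K (whisker H)) ^ N) u) :
    ∃ s : Finset (Fin n),
      Submodule.colon
        (Ideal.span {m | ∃ w : (Fin n ⊕ Fin n) →₀ ℕ,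
          IsMinimalGen ((coverIdeal K (whisker H)) ^ N) w ∧ lexGT w u ∧
          m = MvPolynomial.monomial w (1 : K)})
        (Ideal.span {MvPolynomial.monomial u (1 : K)})
      = Ideal.span ((fun i : Fin n => MvPolynomial.X (Sum.inl i)) '' ↑s) := by
  classical
  refine ⟨Finset.univ.filter (fun i => 0 < u (Sum.inr i)), ?_⟩
  have huG : u ∈ Stmt19Aux.Gens H N := (Stmt19Aux.isMinimalGen_iff K).mp hu
  have hLset : {m | ∃ w : (Fin n ⊕ Fin n) →₀ ℕ,
        IsMinimalGen ((coverIdeal K (whisker H)) ^ N) w ∧ lexGT w u ∧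
        m = MvPolynomial.monomial w (1 : K)}
      = (fun w => monomial w (1 : K)) ''
        {w | IsMinimalGen ((coverIdeal K (whisker H)) ^ N) w ∧ lexGT w u} := by
    ext m
    constructor
    · rintro ⟨w, h1, h2, rfl⟩; exact ⟨w, ⟨h1, h2⟩, rfl⟩
    · rintro ⟨w, ⟨h1, h2⟩, rfl⟩; exact ⟨w, h1, h2, rfl⟩
  rw [hLset]
  apply le_antisymm
  · intro f hf
    have hmul : monomial u (1 : K) * f ∈ Ideal.span ((fun w => monomial w (1 : K)) ''
        {w | IsMinimalGen ((coverIdeal K (whisker H)) ^ N) w ∧ lexGT w u}) := by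
      have := Submodule.mem_colon.mp hf (monomial u 1) (Ideal.subset_span rfl)
      rwa [smul_eq_mul, mul_comm] at this
    have key := mem_ideal_span_monomial_image.mp hmul
    have himg : ((fun i : Fin n => (X (Sum.inl i) : MvPolynomial (Fin n ⊕ Fin n) K)) ''
        ↑(Finset.univ.filter fun i => 0 < u (Sum.inr i)))
        = X '' (Sum.inl '' ↑(Finset.univ.filter fun i : Fin n => 0 < u (Sum.inr i))) := by
      rw [Set.image_image]
    rw [himg, mem_ideal_span_X_image]
    intro m hm
    have hsupp : u + m ∈ (monomial u (1 : K) * f).support := by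
      rw [MvPolynomial.mem_support_iff, coeff_monomial_mul, one_mul]
      exact MvPolynomial.mem_support_iff.mp hm
    obtain ⟨w, hwW, hle⟩ := key _ hsupp
    obtain ⟨hwgen, hwlex⟩ := hwW
    have hwG := (Stmt19Aux.isMinimalGen_iff K).mp hwgen
    obtain ⟨i, hi1, hi2⟩ := Stmt19Aux.pivot hwG huG hwlex
    refine ⟨Sum.inl i, ⟨i, by simp [hi1], rfl⟩, ?_⟩
    have hle' := Finsupp.le_def.mp hle (Sum.inl i)
    rw [Finsupp.add_apply] at hle'
    omega
  · rw [Ideal.span_le]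
    rintro x ⟨i, hi, rfl⟩
    have hi' : 0 < u (Sum.inr i) := by
      simpa using hi
    obtain ⟨u', hu'G, hid⟩ := Stmt19Aux.exchange huG hi'
    have happ : ∀ p, u' p + Finsupp.single (Sum.inr i) 1 p
        = u p + Finsupp.single (Sum.inl i) 1 p := fun p => by
      rw [← Finsupp.add_apply, ← Finsupp.add_apply, hid]
    have hlex : lexGT u' u := by
      refine ⟨Sum.inl i, ?_, ?_⟩
      · have h1 := happ (Sum.inl i)
        simp [Finsupp.single_apply] at h1
        omega
      · intro q hq
        have h1 := happ q
        rcases q with j | j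
        · have hji : j ≠ i := by
            intro hji; subst hji
            simp [vrank] at hq
          simpa [Finsupp.single_apply, hji, Ne.symm hji] using h1
        · have hji : j ≠ i := by
            intro hji; subst hji
            simp [vrank] at hq
          simpa [Finsupp.single_apply, hji, Ne.symm hji] using h1
    have hmono : X (Sum.inl i) * monomial u (1 : K)
        = monomial (Finsupp.single (Sum.inr i) 1) 1 * monomial u' 1 := by
      rw [X, monomial_mul, monomial_mul, one_mul,
        add_comm (Finsupp.single (Sum.inl i) 1) u,
        add_comm (Finsupp.single (Sum.inr i) 1) u', ← hid]
    rw [SetLike.mem_coe, Submodule.mem_colon]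
    intro p hp
    obtain ⟨c, rfl⟩ := Ideal.mem_span_singleton'.mp hp
    have hmem : monomial u' (1 : K) ∈ Ideal.span ((fun w => monomial w (1 : K)) ''
        {w | IsMinimalGen ((coverIdeal K (whisker H)) ^ N) w ∧ lexGT w u}) :=
      Ideal.subset_span ⟨u', ⟨(Stmt19Aux.isMinimalGen_iff K).mpr hu'G, hlex⟩, rfl⟩
    have heq2 : (X (Sum.inl i) : MvPolynomial (Fin n ⊕ Fin n) K) • (c * monomial u (1 : K))
        = (c * monomial (Finsupp.single (Sum.inr i) 1) 1) * monomial u' 1 := by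
      rw [smul_eq_mul,
        show X (Sum.inl i) * (c * monomial u (1 : K))
          = c * (X (Sum.inl i) * monomial u 1) by ring, hmono]
      ring
    rw [heq2]
    exact Ideal.mul_mem_left _ _ hmem
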